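/- arXiv:2504.20286 — 2 statements merged into one kernel-verified Lean document; each statement's English description precedes it below -/
import Mathlib

section
/- For every n ≥ 1, the F_{2n}-th letter of the golden string S is B, and the F_{2n+1}-th letter of S is A. -/
/-- The finite golden strings: `gs 1 = [B]`, `gs 2 = [B, A]`, `gs n = gs (n-1) ++ gs (n-2)`.
Here `true` denotes the letter B and `false` denotes the letter A. -/
def gs : ℕ → List Bool
  | 0 => []
  | 1 => [true]
  | 2 => [true, false]
  | (n+3) => gs (n+2) ++ gs (n+1)

/-- The `i`-th letter (1-indexed) of the infinite golden string `S`;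
`true` = B, `false` = A.  Since `gs n` is a prefix of `gs (n+1)` and
`(gs (i+1)).length = F (i+2) ≥ i`, this is well-defined. -/
def goldenLetter (i : ℕ) : Bool := (gs (i+1)).getD (i-1) true

/-- `s` is the (index set of the) Zeckendorf decomposition of `n`:
a set of indices `≥ 2`, no two adjacent, with `n = ∑_{i ∈ s} F i`. -/
def IsZeck (n : ℕ) (s : Finset ℕ) : Prop :=
  (∀ i ∈ s, 2 ≤ i) ∧ (∀ i ∈ s, i + 1 ∉ s) ∧ n = ∑ i ∈ s, Nat.fib i

/-- `c` is the coefficient function of the Chung–Graham decomposition of `n`: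
`n = ∑_{i ≥ 1} c i * F (2i)` with `c i ∈ {0,1,2}` and a coefficient `0`
strictly between any two coefficients equal to `2`. -/
def IsCG (n : ℕ) (c : ℕ →₀ ℕ) : Prop :=
  (∀ i, c i ≤ 2) ∧ c 0 = 0 ∧
  (∀ i₁ i₂, i₁ < i₂ → c i₁ = 2 → c i₂ = 2 → ∃ j, i₁ < j ∧ j < i₂ ∧ c j = 0) ∧
  n = c.sum (fun i a => a * Nat.fib (2 * i))

/-- `n` has `F (2k)` as the smallest summand of its Zeckendorf decomposition. -/
def ZeckMin (k n : ℕ) : Prop :=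
  ∃ s : Finset ℕ, IsZeck n s ∧ 2 * k ∈ s ∧ ∀ i ∈ s, 2 * k ≤ i

/-- `n` has `F (2k)` or `2 F (2k)` as the smallest summand of its
Chung–Graham decomposition. -/
def CGMin (k n : ℕ) : Prop :=
  ∃ c : ℕ →₀ ℕ, IsCG n c ∧ 1 ≤ c k ∧ ∀ i < k, c i = 0

lemma gs_len : ∀ n, (gs (n+1)).length = Nat.fib (n+2) := by
  intro n
  induction n using Nat.strong_induction_on with
  | _ n ih =>
    match n with
    | 0 => rfl
    | 1 => rfl
    | (m+2) =>
      show (gs (m+2) ++ gs (m+1)).length = _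
      rw [List.length_append, ih m (by omega), ih (m+1) (by omega)]
      have h1 : Nat.fib (m+4) = Nat.fib (m+2) + Nat.fib (m+3) := Nat.fib_add_two
      have h2 : Nat.fib (m+3) = Nat.fib (m+1) + Nat.fib (m+2) := Nat.fib_add_two
      show Nat.fib (m+3) + Nat.fib (m+2) = Nat.fib (m+4)
      omega

lemma gs_prefix_succ : ∀ n, gs n <+: gs (n+1)
  | 0 => List.nil_prefix
  | 1 => ⟨[false], rfl⟩
  | (n+2) => List.prefix_append _ _

lemma gs_prefix {a b : ℕ} (h : a ≤ b) : gs a <+: gs b := by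
  induction b, h using Nat.le_induction with
  | base => exact List.prefix_refl _
  | succ b _ ih => exact ih.trans (gs_prefix_succ b)

lemma fib_ge : ∀ m, m + 1 ≤ Nat.fib (m+2) := by
  intro m
  induction m with
  | zero => simp
  | succ m ih =>
    have h2 : Nat.fib (m+3) = Nat.fib (m+1) + Nat.fib (m+2) := Nat.fib_add_two
    have h3 : 0 < Nat.fib (m+1) := Nat.fib_pos.mpr (by omega)
    show m + 2 ≤ Nat.fib (m+3)
    omega

lemma gs_last : ∀ n, (gs (2*n+1)).getLast? = some true ∧ (gs (2*n+2)).getLast? = some false := by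
  intro n
  induction n with
  | zero => constructor <;> rfl
  | succ n ih =>
    have h1 : gs (2*(n+1)+1) = gs (2*n+2) ++ gs (2*n+1) := by show gs (2*n+3) = _; rfl
    have h2 : gs (2*(n+1)+2) = gs (2*(n+1)+1) ++ gs (2*n+2) := by show gs (2*n+4) = _; rfl
    constructor
    · rw [h1, List.getLast?_append, ih.1]; rfl
    · rw [h2, List.getLast?_append, ih.2]; rfl

lemma golden_at_fib (m : ℕ) :
    goldenLetter (Nat.fib (m+2)) = ((gs (m+1)).getLast?).getD true := by
  set i := Nat.fib (m+2) with hi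
  have hge : m + 1 ≤ i := fib_ge m
  have hlen : (gs (m+1)).length = i := gs_len m
  obtain ⟨t, ht⟩ := gs_prefix (show m+1 ≤ i+1 by omega)
  show (gs (i+1)).getD (i-1) true = _
  rw [← ht, List.getD_append _ _ _ _ (by omega)]
  rw [List.getLast?_eq_getElem?, List.getD_eq_getElem?_getD, hlen]

theorem golden_fib_letters (n : ℕ) (hn : 1 ≤ n) :
    goldenLetter (Nat.fib (2 * n)) = true ∧ goldenLetter (Nat.fib (2 * n + 1)) = false := by
  obtain ⟨k, rfl⟩ : ∃ k, n = k + 1 := ⟨n - 1, by omega⟩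
  constructor
  · have h1 : 2 * (k+1) = (2*k) + 2 := by ring
    rw [h1, golden_at_fib]
    rw [(gs_last k).1]; rfl
  · have h1 : 2 * (k+1) + 1 = (2*k+1) + 2 := by ring
    rw [h1, golden_at_fib]
    rw [(gs_last k).2]; rfl
end

section
/- For every n ≥ 2, the 2F_{2n+1}-th letter of the golden string S is A, and the (F_{2n+1} − 1)-th letter of S is B. -/
lemma gs_length : ∀ m, (gs (m+1)).length = Nat.fib (m+2)
  | 0 => rfl
  | 1 => rfl
  | (m+2) => by
      show (gs (m+2) ++ gs (m+1)).length = Nat.fib (m+4)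
      rw [List.length_append, gs_length (m+1), gs_length m]
      have h : Nat.fib (m+4) = Nat.fib (m+2) + Nat.fib (m+3) := Nat.fib_add_two
      show Nat.fib (m+3) + Nat.fib (m+2) = Nat.fib (m+4)
      omega

lemma gs_prefix_s6 (m : ℕ) : gs (m+1) <+: gs (m+2) := by
  cases m with
  | zero => exact ⟨[false], rfl⟩
  | succ m => exact ⟨gs (m+1), rfl⟩

lemma gs_prefix_le {m k : ℕ} (h : m ≤ k) : gs (m+1) <+: gs (k+1) := by
  induction k with
  | zero => simp [Nat.le_zero.mp h]
  | succ k ih =>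
      rcases Nat.lt_or_ge m (k+1) with hlt | hge
      · exact (ih (by omega)).trans (gs_prefix_s6 k)
      · have : m = k + 1 := by omega
        simp [this]

lemma prefix_getD {l1 l2 : List Bool} (h : l1 <+: l2) {j : ℕ} (hj : j < l1.length)
    (d : Bool) : l1.getD j d = l2.getD j d := by
  rw [List.getD_eq_getElem l1 d hj, List.getD_eq_getElem l2 d (hj.trans_le h.length_le),
    List.IsPrefix.getElem h hj]

lemma getD_append (l₁ l₂ : List Bool) (j : ℕ) (d : Bool) :
    (l₁ ++ l₂).getD (l₁.length + j) d = l₂.getD j d := by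
  simp [List.getD, List.getElem?_append_right]

lemma lt_fib (i : ℕ) : i < Nat.fib (i+2) := by
  induction i with
  | zero => simp
  | succ i ih =>
      have h1 : 0 < Nat.fib (i+2) := Nat.fib_pos.mpr (by omega)
      have h2 : Nat.fib (i+3) = Nat.fib (i+1) + Nat.fib (i+2) := Nat.fib_add_two
      have h3 : 0 < Nat.fib (i+1) := Nat.fib_pos.mpr (by omega)
      show i + 1 < Nat.fib (i+3)
      omega

lemma goldenLetter_eq {m i : ℕ} (h1 : 1 ≤ i) (h2 : i ≤ (gs (m+1)).length) :
    goldenLetter i = (gs (m+1)).getD (i-1) true := by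
  unfold goldenLetter
  rcases le_or_gt m i with hmi | him
  · exact (prefix_getD (gs_prefix_le hmi) (by omega) true).symm
  · have hl : i - 1 < (gs (i+1)).length := by
      have hL : (gs (i+1)).length = Nat.fib (i+2) := gs_length i
      have := lt_fib i
      omega
    exact prefix_getD (gs_prefix_le him.le) hl true

/-- The second-to-last letter of `gs (2k+2)` is `true` (B). -/
lemma factA : ∀ k, (gs (2*k+2)).getD (Nat.fib (2*k+3) - 2) true = true := by
  intro k
  induction k with
  | zero => rfl
  | succ k ih =>
      have hgs : gs (2*(k+1)+2) = gs (2*k+3) ++ gs (2*k+2) := rfl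
      have hf2 : 2*k+1 < Nat.fib (2*k+3) := lt_fib (2*k+1)
      have hL : (gs (2*k+3)).length = Nat.fib (2*k+4) := gs_length (2*k+2)
      have he : Nat.fib (2*k+5) = Nat.fib (2*k+3) + Nat.fib (2*k+4) := Nat.fib_add_two
      have hidx : Nat.fib (2*(k+1)+3) - 2
          = (gs (2*k+3)).length + (Nat.fib (2*k+3) - 2) := by
        show Nat.fib (2*k+5) - 2 = (gs (2*k+3)).length + (Nat.fib (2*k+3) - 2)
        rw [hL]; omega
      rw [hgs, hidx, getD_append]
      exact ih

/-- The last letter of `gs (2k+2)` is `false` (A). -/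
lemma factB : ∀ k, (gs (2*k+2)).getD (Nat.fib (2*k+3) - 1) true = false := by
  intro k
  induction k with
  | zero => rfl
  | succ k ih =>
      have hgs : gs (2*(k+1)+2) = gs (2*k+3) ++ gs (2*k+2) := rfl
      have hf2 : 0 < Nat.fib (2*k+3) := Nat.fib_pos.mpr (by omega)
      have hL : (gs (2*k+3)).length = Nat.fib (2*k+4) := gs_length (2*k+2)
      have he : Nat.fib (2*k+5) = Nat.fib (2*k+3) + Nat.fib (2*k+4) := Nat.fib_add_two
      have hidx : Nat.fib (2*(k+1)+3) - 1
          = (gs (2*k+3)).length + (Nat.fib (2*k+3) - 1) := by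
        show Nat.fib (2*k+5) - 1 = (gs (2*k+3)).length + (Nat.fib (2*k+3) - 1)
        rw [hL]; omega
      rw [hgs, hidx, getD_append]
      exact ih

theorem golden_special_positions (n : ℕ) (hn : 2 ≤ n) :
    goldenLetter (2 * Nat.fib (2 * n + 1)) = false ∧
      goldenLetter (Nat.fib (2 * n + 1) - 1) = true := by
  obtain ⟨N, rfl⟩ : ∃ N, n = N + 2 := ⟨n - 2, by omega⟩
  have h1 : 0 < Nat.fib (2*N+3) := Nat.fib_pos.mpr (by omega)
  have h2 : 0 < Nat.fib (2*N+4) := Nat.fib_pos.mpr (by omega)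
  have h5 : 2*N+3 < Nat.fib (2*N+5) := lt_fib (2*N+3)
  have e5 : Nat.fib (2*N+5) = Nat.fib (2*N+3) + Nat.fib (2*N+4) := Nat.fib_add_two
  have e4 : Nat.fib (2*N+4) = Nat.fib (2*N+2) + Nat.fib (2*N+3) := Nat.fib_add_two
  have e6 : Nat.fib (2*N+6) = Nat.fib (2*N+4) + Nat.fib (2*N+5) := Nat.fib_add_two
  have e7 : Nat.fib (2*N+7) = Nat.fib (2*N+5) + Nat.fib (2*N+6) := Nat.fib_add_two
  have hfn : 2 * (N+2) + 1 = 2*N+5 := by omega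
  rw [hfn]
  constructor
  · -- letter at 2 * fib (2N+5)
    have hL6 : (gs (2*N+5+1)).length = Nat.fib (2*N+7) := gs_length (2*N+5)
    have hle : 2 * Nat.fib (2*N+5) ≤ (gs (2*N+5+1)).length := by
      rw [hL6]; omega
    rw [goldenLetter_eq (m := 2*N+5) (by omega) hle]
    have hgs : gs (2*N+5+1) = gs (2*N+5) ++ gs (2*N+4) := rfl
    have hL5 : (gs (2*N+5)).length = Nat.fib (2*N+6) := gs_length (2*N+4)
    have hidx : 2 * Nat.fib (2*N+5) - 1
        = (gs (2*N+5)).length + (Nat.fib (2*N+3) - 1) := by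
      rw [hL5]; omega
    rw [hgs, hidx, getD_append]
    have hpre : gs (2*N+2) <+: gs (2*N+4) :=
      gs_prefix_le (m := 2*N+1) (k := 2*N+3) (by omega)
    have hjlt : Nat.fib (2*N+3) - 1 < (gs (2*N+2)).length := by
      have hL2 : (gs (2*N+2)).length = Nat.fib (2*N+3) := gs_length (2*N+1)
      omega
    rw [← prefix_getD hpre hjlt true]
    exact factB N
  · -- letter at fib (2N+5) - 1
    have hL4 : (gs (2*N+3+1)).length = Nat.fib (2*N+5) := gs_length (2*N+3)
    have hle : Nat.fib (2*N+5) - 1 ≤ (gs (2*N+3+1)).length := by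
      rw [hL4]; omega
    rw [goldenLetter_eq (m := 2*N+3) (by omega) hle]
    have hidx : Nat.fib (2*N+5) - 1 - 1 = Nat.fib (2*N+5) - 2 := by omega
    rw [hidx]
    exact factA (N+1)
end
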